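/- Let 0 < k < 1 and δ ∈ {1,-1}. Then u(t,x) = c1 + c2·e^{-x} + (1 - e^{-x}/k)·t + (δ/k)·[2(k + e^{-x}/2)·arctan√((e^{-x} - k)/k) - 3√(k(e^{-x} - k))] satisfies the PDE u_t + (u_x + u_xx)^2 = 0 for all t and all x < -log k. -/

import Mathlib

open Real

noncomputable def D1fun (k t c2 δ : ℝ) : ℝ → ℝ := fun y =>
  -c2 * Real.exp (-y) + Real.exp (-y) / k * t
    + (δ / k) * (-(Real.exp (-y)) * Real.arctan (Real.sqrt ((Real.exp (-y) - k) / k))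
      + k * Real.sqrt ((Real.exp (-y) - k) / k))

lemma hE (y : ℝ) : HasDerivAt (fun z : ℝ => Real.exp (-z)) (-(Real.exp (-y))) y := by
  have h := (Real.hasDerivAt_exp (-y)).comp y ((hasDerivAt_id y).neg)
  simpa [Function.comp_def] using h

lemma keyA (k t c1 c2 δ : ℝ) (hk : 0 < k) {y : ℝ} (hy : k < Real.exp (-y)) :
    HasDerivAt (fun z => c1 + c2 * Real.exp (-z) + (1 - Real.exp (-z) / k) * t
      + (δ / k) * (2 * (k + Real.exp (-z) / 2) * Real.arctan (Real.sqrt ((Real.exp (-z) - k) / k))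
        - 3 * Real.sqrt (k * (Real.exp (-z) - k))))
      (D1fun k t c2 δ y) y := by
  set w := Real.exp (-y) with hwdef
  have hwk : (0:ℝ) < w - k := sub_pos.mpr hy
  have hq : (0:ℝ) < (w - k) / k := div_pos hwk hk
  set g := Real.sqrt ((w - k) / k) with hgdef
  have hgpos : 0 < g := Real.sqrt_pos.mpr hq
  have hg2 : g ^ 2 = (w - k) / k := Real.sq_sqrt hq.le
  have hsqrt : Real.sqrt (k * (w - k)) = k * g := by
    have : k * (w - k) = (k * g) ^ 2 := by
      rw [mul_pow, hg2]; field_simp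
    rw [this, Real.sqrt_sq (by positivity)]
  have h1g : 1 + g ^ 2 = w / k := by
    rw [hg2]; field_simp; ring
  -- derivative of inner (exp(-z)-k)/k
  have hQ : HasDerivAt (fun z : ℝ => (Real.exp (-z) - k) / k) (-w / k) y :=
    ((hE y).sub_const k).div_const k
  have hG : HasDerivAt (fun z : ℝ => Real.sqrt ((Real.exp (-z) - k) / k))
      (1 / (2 * g) * (-w / k)) y := by
    have := (Real.hasDerivAt_sqrt (ne_of_gt hq)).comp y hQ
    simpa [hgdef, Function.comp_def] using this
  have hA : HasDerivAt (fun z : ℝ => Real.arctan (Real.sqrt ((Real.exp (-z) - k) / k)))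
      (1 / (1 + g ^ 2) * (1 / (2 * g) * (-w / k))) y := by
    have := (Real.hasDerivAt_arctan g).comp y hG
    simpa [hgdef, Function.comp_def] using this
  have hSin : HasDerivAt (fun z : ℝ => k * (Real.exp (-z) - k)) (k * -w) y :=
    ((hE y).sub_const k).const_mul k
  have hS : HasDerivAt (fun z : ℝ => Real.sqrt (k * (Real.exp (-z) - k)))
      (1 / (2 * (k * g)) * (k * -w)) y := by
    have hne : k * (w - k) ≠ 0 := by positivity
    have := (Real.hasDerivAt_sqrt hne).comp y hSin
    simpa [hsqrt, Function.comp_def] using this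
  have hT3 : HasDerivAt (fun z : ℝ => 2 * (k + Real.exp (-z) / 2)) (2 * (-w / 2)) y :=
    (((hE y).div_const 2).const_add k).const_mul 2
  have hbig := ((((hE y).const_mul c2).const_add c1).add
      ((((hE y).div_const k).const_sub 1).mul_const t)).add
      (((hT3.mul hA).sub (hS.const_mul 3)).const_mul (δ / k))
  refine hbig.congr_deriv (Eq.symm ?_)
  simp only [D1fun]
  have hk' : k ≠ 0 := ne_of_gt hk
  have hg' : g ≠ 0 := ne_of_gt hgpos
  have hw' : w ≠ 0 := by positivity
  have hrel : k * g ^ 2 = w - k := by rw [hg2]; field_simp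
  simp only [← hwdef, ← hgdef, h1g]
  generalize Real.arctan g = a
  field_simp
  linear_combination (2*δ) * hrel

lemma keyB (k t c2 δ : ℝ) (hk : 0 < k) {y : ℝ} (hy : k < Real.exp (-y)) :
    HasDerivAt (D1fun k t c2 δ)
      (c2 * Real.exp (-y) - Real.exp (-y) / k * t
        + (δ / k) * (Real.exp (-y) * Real.arctan (Real.sqrt ((Real.exp (-y) - k) / k)))) y := by
  set w := Real.exp (-y) with hwdef
  have hwk : (0:ℝ) < w - k := sub_pos.mpr hy
  have hq : (0:ℝ) < (w - k) / k := div_pos hwk hk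
  set g := Real.sqrt ((w - k) / k) with hgdef
  have hgpos : 0 < g := Real.sqrt_pos.mpr hq
  have hg2 : g ^ 2 = (w - k) / k := Real.sq_sqrt hq.le
  have h1g : 1 + g ^ 2 = w / k := by
    rw [hg2]; field_simp; ring
  have hQ : HasDerivAt (fun z : ℝ => (Real.exp (-z) - k) / k) (-w / k) y :=
    ((hE y).sub_const k).div_const k
  have hG : HasDerivAt (fun z : ℝ => Real.sqrt ((Real.exp (-z) - k) / k))
      (1 / (2 * g) * (-w / k)) y := by
    have := (Real.hasDerivAt_sqrt (ne_of_gt hq)).comp y hQ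
    simpa [hgdef, Function.comp_def] using this
  have hA : HasDerivAt (fun z : ℝ => Real.arctan (Real.sqrt ((Real.exp (-z) - k) / k)))
      (1 / (1 + g ^ 2) * (1 / (2 * g) * (-w / k))) y := by
    have := (Real.hasDerivAt_arctan g).comp y hG
    simpa [hgdef, Function.comp_def] using this
  have hbig := (((hE y).const_mul (-c2)).add (((hE y).div_const k).mul_const t)).add
      ((((hE y).neg.mul hA).add (hG.const_mul k)).const_mul (δ / k))
  have heq : D1fun k t c2 δ = fun z => -c2 * Real.exp (-z) + Real.exp (-z) / k * t
      + (δ / k) * (-(Real.exp (-z)) * Real.arctan (Real.sqrt ((Real.exp (-z) - k) / k))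
        + k * Real.sqrt ((Real.exp (-z) - k) / k)) := rfl
  rw [heq]
  refine hbig.congr_deriv (Eq.symm ?_)
  have hk' : k ≠ 0 := ne_of_gt hk
  have hg' : g ≠ 0 := ne_of_gt hgpos
  have hw' : w ≠ 0 := by positivity
  have hrel : k * g ^ 2 = w - k := by rw [hg2]; field_simp
  simp only [Pi.neg_apply, ← hwdef, ← hgdef, h1g]
  generalize Real.arctan g = a
  field_simp
  ring

theorem stmt8 (k δ c1 c2 : ℝ)
    (hk : 0 < k)
    (hk1 : k < 1)
    (hδ : δ = 1 ∨ δ = -1)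
    (u : ℝ → ℝ → ℝ)
    (hu : ∀ t x : ℝ, u t x = c1 + c2 * Real.exp (-x) + (1 - Real.exp (-x) / k) * t
      + (δ / k) * (2 * (k + Real.exp (-x) / 2) * Real.arctan (Real.sqrt ((Real.exp (-x) - k) / k))
        - 3 * Real.sqrt (k * (Real.exp (-x) - k)))) :
    ∀ t x : ℝ, x < -Real.log k →
      deriv (fun s => u s x) t
      + (deriv (fun y => u t y) x
         + deriv (fun y => deriv (fun z => u t z) y) x) ^ 2 = 0 := by
  intro t x hx
  have hw : k < Real.exp (-x) := by
    calc k = Real.exp (Real.log k) := (Real.exp_log hk).symm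
    _ < Real.exp (-x) := Real.exp_lt_exp.mpr (by linarith)
  have hufun : (fun z => u t z) = fun z => c1 + c2 * Real.exp (-z) + (1 - Real.exp (-z) / k) * t
      + (δ / k) * (2 * (k + Real.exp (-z) / 2) * Real.arctan (Real.sqrt ((Real.exp (-z) - k) / k))
        - 3 * Real.sqrt (k * (Real.exp (-z) - k))) := funext fun z => hu t z
  -- t-derivative
  have h1 : deriv (fun s => u s x) t = 1 - Real.exp (-x) / k := by
    have heq : (fun s => u s x) = fun s =>
        (c1 + c2 * Real.exp (-x)
          + (δ / k) * (2 * (k + Real.exp (-x) / 2) * Real.arctan (Real.sqrt ((Real.exp (-x) - k) / k))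
            - 3 * Real.sqrt (k * (Real.exp (-x) - k))))
        + s * (1 - Real.exp (-x) / k) := by
      funext s; rw [hu]; ring
    rw [heq]
    have h := (((hasDerivAt_id t).mul_const (1 - Real.exp (-x) / k)).const_add
      (c1 + c2 * Real.exp (-x)
        + (δ / k) * (2 * (k + Real.exp (-x) / 2) * Real.arctan (Real.sqrt ((Real.exp (-x) - k) / k))
          - 3 * Real.sqrt (k * (Real.exp (-x) - k))))).deriv
    simpa using h
  have h2 : deriv (fun y => u t y) x = D1fun k t c2 δ x := by
    rw [hufun]
    exact (keyA k t c1 c2 δ hk hw).deriv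
  have hopen : IsOpen {y : ℝ | k < Real.exp (-y)} :=
    isOpen_lt continuous_const (Real.continuous_exp.comp continuous_neg)
  have hev : (fun y => deriv (fun z => u t z) y) =ᶠ[nhds x] D1fun k t c2 δ := by
    filter_upwards [hopen.mem_nhds hw] with y hy
    rw [hufun]
    exact (keyA k t c1 c2 δ hk hy).deriv
  have h3 : deriv (fun y => deriv (fun z => u t z) y) x
      = c2 * Real.exp (-x) - Real.exp (-x) / k * t
        + (δ / k) * (Real.exp (-x) * Real.arctan (Real.sqrt ((Real.exp (-x) - k) / k))) := by
    rw [hev.deriv_eq]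
    exact (keyB k t c2 δ hk hw).deriv
  rw [h1, h2, h3]
  simp only [D1fun]
  set w := Real.exp (-x) with hwdef
  set g := Real.sqrt ((w - k) / k) with hgdef
  have hwk : (0:ℝ) < w - k := sub_pos.mpr hw
  have hrel : k * g ^ 2 = w - k := by
    rw [hgdef, Real.sq_sqrt (le_of_lt (div_pos hwk hk))]; field_simp
  have hδ2 : δ ^ 2 = 1 := by rcases hδ with h | h <;> rw [h] <;> norm_num
  have hk' : k ≠ 0 := ne_of_gt hk
  have hsum : (-c2 * w + w / k * t + δ / k * (-w * Real.arctan g + k * g))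
      + (c2 * w - w / k * t + δ / k * (w * Real.arctan g)) = δ * g := by
    field_simp; ring
  rw [hsum, mul_pow, hδ2, one_mul]
  rw [hgdef, Real.sq_sqrt (le_of_lt (div_pos hwk hk))]
  field_simp
  ring
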